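/- Let A be ν×ν, B be ν×m, C be p×ν and D be p×m complex matrices, and let R be the (ν+p)×(ν+m) block matrix R = [[A, B], [C, D]]. Assume R* R = I_{ν+m}. Then for every z on the unit circle 𝕋 such that z·I_ν − A is invertible, the matrix F(z) = C (z·I_ν − A)^{-1} B + D satisfies F(z)* F(z) = I_m. -/

import Mathlib

open Matrix

/-- if the realization matrix `R = [[A, B], [C, D]]` satisfies
`Rᴴ R = I`, then `F(z) = C (zI - A)⁻¹ B + D` is an isometry for every `z` on the
unit circle at which `zI - A` is invertible. -/
theorem realization_isometry
    (ν p m : ℕ)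
    (A : Matrix (Fin ν) (Fin ν) ℂ) (B : Matrix (Fin ν) (Fin m) ℂ)
    (C : Matrix (Fin p) (Fin ν) ℂ) (D : Matrix (Fin p) (Fin m) ℂ)
    (hR : (Matrix.fromBlocks A B C D)ᴴ * Matrix.fromBlocks A B C D = 1)
    (z : ℂ) (hz : ‖z‖ = 1)
    (hzA : IsUnit (z • (1 : Matrix (Fin ν) (Fin ν) ℂ) - A)) :
    (C * (z • (1 : Matrix (Fin ν) (Fin ν) ℂ) - A)⁻¹ * B + D)ᴴ *
      (C * (z • (1 : Matrix (Fin ν) (Fin ν) ℂ) - A)⁻¹ * B + D) = 1 := by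
  rw [fromBlocks_conjTranspose, fromBlocks_multiply, ← fromBlocks_one] at hR
  have h11 : Aᴴ * A + Cᴴ * C = 1 := congrArg Matrix.toBlocks₁₁ hR
  have h12 : Aᴴ * B + Cᴴ * D = 0 := congrArg Matrix.toBlocks₁₂ hR
  have h21 : Bᴴ * A + Dᴴ * C = 0 := congrArg Matrix.toBlocks₂₁ hR
  have h22 : Bᴴ * B + Dᴴ * D = 1 := congrArg Matrix.toBlocks₂₂ hR
  set M : Matrix (Fin ν) (Fin ν) ℂ := z • 1 - A with hMdef
  set G : Matrix (Fin ν) (Fin ν) ℂ := M⁻¹ with hGdef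
  have hdet : IsUnit M.det := (isUnit_iff_isUnit_det M).mp hzA
  have hMG : M * G = 1 := mul_nonsing_inv M hdet
  have hGM : G * M = 1 := nonsing_inv_mul M hdet
  have hMGh : Gᴴ * Mᴴ = 1 := by
    calc Gᴴ * Mᴴ = (M * G)ᴴ := (conjTranspose_mul M G).symm
    _ = 1 := by rw [hMG, conjTranspose_one]
  have hzz : (starRingEnd ℂ) z * z = 1 := by
    rw [mul_comm, Complex.mul_conj]
    norm_cast
    simp [Complex.normSq_eq_norm_sq, hz]
  have hzz' : z * (starRingEnd ℂ) z = 1 := by rw [mul_comm]; exact hzz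
  -- key identity
  have hkey : (1 : Matrix (Fin ν) (Fin ν) ℂ) - Aᴴ * A = Aᴴ * M + Mᴴ * A + Mᴴ * M := by
    have hMh : Mᴴ = (starRingEnd ℂ) z • 1 - Aᴴ := by
      simp [hMdef, conjTranspose_smul]
    rw [hMh, hMdef]
    simp only [Matrix.mul_sub, Matrix.sub_mul, Matrix.mul_smul, Matrix.smul_mul,
      Matrix.mul_one, Matrix.one_mul, smul_sub, smul_smul, hzz, hzz', one_smul]
    abel
  have hres : Gᴴ * (1 - Aᴴ * A) * G = Gᴴ * Aᴴ + A * G + 1 := by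
    rw [hkey]
    calc Gᴴ * (Aᴴ * M + Mᴴ * A + Mᴴ * M) * G
        = Gᴴ * Aᴴ * (M * G) + (Gᴴ * Mᴴ) * (A * G) + (Gᴴ * Mᴴ) * (M * G) := by
          simp only [Matrix.mul_add, Matrix.add_mul, Matrix.mul_assoc]
      _ = Gᴴ * Aᴴ + A * G + 1 := by
          rw [hMG, hMGh]
          simp [Matrix.mul_assoc]
  have hCC : Cᴴ * C = 1 - Aᴴ * A := eq_sub_of_add_eq' h11
  have hCD : Cᴴ * D = -(Aᴴ * B) := eq_neg_of_add_eq_zero_right h12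
  have hDC : Dᴴ * C = -(Bᴴ * A) := eq_neg_of_add_eq_zero_right h21
  have hDD : Dᴴ * D = 1 - Bᴴ * B := eq_sub_of_add_eq' h22
  have k1 : Bᴴ * (Gᴴ * (Cᴴ * (C * (G * B)))) =
      Bᴴ * (Gᴴ * (Aᴴ * B)) + Bᴴ * (A * (G * B)) + Bᴴ * B := by
    have h : Gᴴ * (Cᴴ * (C * (G * B))) = (Gᴴ * (Cᴴ * C) * G) * B := by
      simp only [Matrix.mul_assoc]
    rw [h, hCC, hres]
    simp only [Matrix.add_mul, Matrix.mul_add, Matrix.one_mul, Matrix.mul_assoc]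
  have k2 : Bᴴ * (Gᴴ * (Cᴴ * D)) = -(Bᴴ * (Gᴴ * (Aᴴ * B))) := by
    rw [hCD]; simp only [Matrix.mul_neg]
  have k3 : Dᴴ * (C * (G * B)) = -(Bᴴ * (A * (G * B))) := by
    rw [← Matrix.mul_assoc, hDC]
    simp only [Matrix.neg_mul, Matrix.mul_assoc]
  calc (C * G * B + D)ᴴ * (C * G * B + D)
      = Bᴴ * (Gᴴ * (Cᴴ * (C * (G * B)))) + Bᴴ * (Gᴴ * (Cᴴ * D))
          + (Dᴴ * (C * (G * B)) + Dᴴ * D) := by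
        simp only [conjTranspose_add, conjTranspose_mul, Matrix.add_mul, Matrix.mul_add,
          Matrix.mul_assoc]
        abel
    _ = 1 := by rw [k1, k2, k3, hDD]; abel
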